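/- Suppose c ∈ ℝ^m_{>0} is a complex balanced equilibrium of a reaction network with rate constants κ_k. Let θ_i : ℤ → ℝ_{≥0} satisfy θ_i(x) = 0 for x ≤ 0, θ_i(j) > 0 for all integers j ≥ 1, and θ_i(x) → ∞ as x → ∞, and let λ_k be the general intensity functions. Then ∑_{x ∈ ℤ^m_{≥0}} π_c(x) ∑_{k=1}^K λ_k(x) < ∞, where π_c is the product-form measure associated with c. (By the criterion of Anderson–Cappelletti–Koyama–Kurtz, this implies that the associated continuous-time Markov chain is non-explosive.) -/

import Mathlib

open Finset Filter

/-- General (non-mass action) intensity function: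
`λ_k(x) = κ_k ∏_i ∏_{j=0}^{y_{ki}-1} θ_i(x_i - j)`. -/
noncomputable def genIntensity (m K : ℕ) (y : Fin K → Fin m → ℕ) (κ : Fin K → ℝ)
    (θ : Fin m → ℤ → ℝ) (k : Fin K) (x : Fin m → ℤ) : ℝ :=
  κ k * ∏ i, ∏ j ∈ Finset.range (y k i), θ i (x i - j)

/-- Product-form measure `π_c(x) = ∏_i c_i^{x_i} / ∏_{j=1}^{x_i} θ_i(j)`,
extended by `0` outside `ℤ^m_{≥0}`. -/
noncomputable def prodForm (m : ℕ) (c : Fin m → ℝ) (θ : Fin m → ℤ → ℝ)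
    (x : Fin m → ℤ) : ℝ :=
  if ∀ i, 0 ≤ x i then
    ∏ i, (c i ^ (x i).toNat / ∏ j ∈ Finset.range (x i).toNat, θ i (j + 1))
  else 0

/-- `c` is a complex balanced equilibrium: for each complex `z`,
`∑_{k : y_k' = z} κ_k c^{y_k} = ∑_{k : y_k = z} κ_k c^{y_k}`. -/
def complexBalanced (m K : ℕ) (y y' : Fin K → Fin m → ℕ) (κ : Fin K → ℝ)
    (c : Fin m → ℝ) : Prop :=
  ∀ z : Fin m → ℕ, ((∃ k, y k = z) ∨ (∃ k, y' k = z)) →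
    ∑ k ∈ Finset.univ.filter (fun k => y' k = z), κ k * ∏ i, c i ^ y k i =
    ∑ k ∈ Finset.univ.filter (fun k => y k = z), κ k * ∏ i, c i ^ y k i

/-- The stationarity equation:
`∑_k μ(x - y_k' + y_k) λ_k(x - y_k' + y_k) = μ(x) ∑_k λ_k(x)` for all `x ∈ ℤ^m_{≥0}`. -/
def stationaryEq (m K : ℕ) (y y' : Fin K → Fin m → ℕ)
    (μ : (Fin m → ℤ) → ℝ) (lam : Fin K → (Fin m → ℤ) → ℝ) : Prop :=
  ∀ x : Fin m → ℕ,
    ∑ k : Fin K, μ (fun i => (x i : ℤ) - y' k i + y k i) *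
        lam k (fun i => (x i : ℤ) - y' k i + y k i)
      = μ (fun i => (x i : ℤ)) * ∑ k : Fin K, lam k (fun i => (x i : ℤ))

lemma auxP_pos (θ : ℤ → ℝ) (hθpos : ∀ j : ℤ, 1 ≤ j → 0 < θ j) (n : ℕ) :
    0 < ∏ j ∈ Finset.range n, θ (j + 1) := by
  apply Finset.prod_pos
  intro j _
  exact hθpos _ (by omega)

lemma aux_coord (θ : ℤ → ℝ) (hθpos : ∀ j : ℤ, 1 ≤ j → 0 < θ j) (c : ℝ) (b d : ℕ) :
    c ^ (b + d) / (∏ j ∈ Finset.range (b + d), θ (j + 1)) *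
        ∏ j ∈ Finset.range b, θ (((b + d : ℕ) : ℤ) - j)
      = c ^ b * (c ^ d / ∏ j ∈ Finset.range d, θ (j + 1)) := by
  have hP := auxP_pos θ hθpos
  have hprod1 : ∏ j ∈ Finset.range b, θ (((b + d : ℕ) : ℤ) - j)
      = ∏ j ∈ Finset.range b, θ ((d : ℤ) + j + 1) := by
    rw [← Finset.prod_range_reflect (fun j => θ ((d : ℤ) + j + 1)) b]
    apply Finset.prod_congr rfl
    intro j hj
    simp only [Finset.mem_range] at hj
    congr 1
    omega
  have hprod2 : ∏ j ∈ Finset.range (b + d), θ (j + 1)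
      = (∏ j ∈ Finset.range d, θ (j + 1)) * ∏ j ∈ Finset.range b, θ ((d : ℤ) + j + 1) := by
    rw [Nat.add_comm b d, Finset.prod_range_add]
    congr 1
  rw [hprod1, hprod2, pow_add]
  have h1 := (hP d).ne'
  have h2 : (∏ j ∈ Finset.range b, θ ((d : ℤ) + j + 1)) ≠ 0 := by
    apply ne_of_gt
    apply Finset.prod_pos
    intro j _
    exact hθpos _ (by omega)
  field_simp

lemma aux_oneDim (θ : ℤ → ℝ) (c : ℝ) (hc : 0 < c)
    (hθpos : ∀ j : ℤ, 1 ≤ j → 0 < θ j)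
    (hθlim : Filter.Tendsto θ Filter.atTop Filter.atTop) :
    Summable (fun n : ℕ => c ^ n / ∏ j ∈ Finset.range n, θ (j + 1)) := by
  set f : ℕ → ℝ := fun n => c ^ n / ∏ j ∈ Finset.range n, θ (j + 1) with hf
  have hP := auxP_pos θ hθpos
  have hfpos : ∀ n, 0 < f n := fun n => div_pos (pow_pos hc n) (hP n)
  apply summable_of_ratio_norm_eventually_le (r := 1/2) (by norm_num)
  obtain ⟨N, hN⟩ := Filter.eventually_atTop.mp (hθlim.eventually_ge_atTop (2 * c))
  rw [Filter.eventually_atTop]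
  refine ⟨N.toNat, fun n hn => ?_⟩
  have hθn : 2 * c ≤ θ ((n : ℤ) + 1) := by
    apply hN
    have := Int.self_le_toNat N
    omega
  have hθn' : 0 < θ ((n : ℤ) + 1) := lt_of_lt_of_le (by linarith) hθn
  have hstep : f (n + 1) = f n * (c / θ ((n : ℤ) + 1)) := by
    rw [hf]
    simp only [Finset.prod_range_succ, pow_succ]
    field_simp
  rw [Real.norm_of_nonneg (hfpos _).le, Real.norm_of_nonneg (hfpos _).le, hstep]
  have : c / θ ((n : ℤ) + 1) ≤ 1 / 2 := by
    rw [div_le_div_iff₀ hθn' (by norm_num)]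
    linarith
  calc f n * (c / θ ((n : ℤ) + 1)) ≤ f n * (1 / 2) := by
        apply mul_le_mul_of_nonneg_left this (hfpos n).le
    _ = 1 / 2 * f n := by ring

lemma aux_pi : ∀ (m : ℕ) (f : Fin m → ℕ → ℝ), (∀ i n, 0 ≤ f i n) → (∀ i, Summable (f i)) →
    Summable (fun x : Fin m → ℕ => ∏ i, f i (x i)) := by
  intro m
  induction m with
  | zero =>
    intro f _ _
    exact .of_finite
  | succ m ih =>
    intro f hnn hs
    have hmain : Summable (fun p : ℕ × (Fin m → ℕ) =>
        f 0 p.1 * ∏ i : Fin m, f i.succ (p.2 i)) := by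
      apply Summable.mul_of_nonneg (hs 0)
        (ih (fun i => f i.succ) (fun i n => hnn _ _) (fun i => hs _))
      · exact fun n => hnn 0 n
      · exact fun v => Finset.prod_nonneg fun i _ => hnn _ _
    refine (Equiv.summable_iff (Fin.consEquiv (fun _ : Fin (m + 1) => ℕ))
      (f := fun x : Fin (m + 1) → ℕ => ∏ i, f i (x i))).mp (hmain.congr fun p => ?_)
    simp only [Function.comp_apply, Fin.consEquiv_apply, Fin.prod_univ_succ,
      Fin.cons_zero, Fin.cons_succ]

/-- If `c` is a complex balanced equilibrium and each `θ_i → ∞`,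
then `∑_{x ∈ ℤ^m_{≥0}} π_c(x) ∑_k λ_k(x) < ∞` (the non-explosivity criterion of
Anderson–Cappelletti–Koyama–Kurtz). -/
theorem stmt3 (m K : ℕ) (y y' : Fin K → Fin m → ℕ) (κ : Fin K → ℝ)
    (c : Fin m → ℝ) (θ : Fin m → ℤ → ℝ)
    (hyy' : ∀ k, y k ≠ y' k) (hκ : ∀ k, 0 < κ k) (hc : ∀ i, 0 < c i)
    (hθnn : ∀ i x, 0 ≤ θ i x)
    (hθ0 : ∀ i, ∀ x : ℤ, x ≤ 0 → θ i x = 0)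
    (hθpos : ∀ i, ∀ j : ℤ, 1 ≤ j → 0 < θ i j)
    (hθlim : ∀ i, Filter.Tendsto (θ i) Filter.atTop Filter.atTop)
    (hcb : complexBalanced m K y y' κ c) :
    Summable (fun x : Fin m → ℕ =>
      prodForm m c θ (fun i => (x i : ℤ)) *
        ∑ k : Fin K, genIntensity m K y κ θ k (fun i => (x i : ℤ))) := by
  classical
  -- the basic summable product-form series over ℕ^m
  have hπ : Summable (fun x : Fin m → ℕ =>
      ∏ i, (c i ^ (x i) / ∏ j ∈ Finset.range (x i), θ i (j + 1))) := by
    apply aux_pi m (fun i n => c i ^ n / ∏ j ∈ Finset.range n, θ i (j + 1))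
    · intro i n
      exact div_nonneg (pow_nonneg (hc i).le n) (auxP_pos (θ i) (hθpos i) n).le
    · intro i
      exact aux_oneDim (θ i) (c i) (hc i) (hθpos i) (hθlim i)
  -- shifted product forms
  set G : Fin K → (Fin m → ℕ) → ℝ :=
    fun k x => prodForm m c θ (fun i => (x i : ℤ) - y k i) with hG
  have hGsum : ∀ k, Summable (G k) := by
    intro k
    set T : (Fin m → ℕ) → (Fin m → ℕ) := fun x i => x i + y k i with hT
    have hTinj : Function.Injective T := by
      intro a b hab
      funext i
      have := congrFun hab i
      simpa [hT] using this
    have hvan : ∀ x, x ∉ Set.range T → G k x = 0 := by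
      intro x hx
      have hex : ∃ i, x i < y k i := by
        by_contra hcon
        push_neg at hcon
        exact hx ⟨fun i => x i - y k i, funext fun i => by have := hcon i; simp [hT]; omega⟩
      obtain ⟨i0, hi0⟩ := hex
      rw [hG]
      simp only [prodForm]
      rw [if_neg]
      push_neg
      exact ⟨i0, by omega⟩
    have hcomp : (G k ∘ T) = fun x : Fin m → ℕ =>
        ∏ i, (c i ^ (x i) / ∏ j ∈ Finset.range (x i), θ i (j + 1)) := by
      funext x
      have harg : (fun i => ((T x i : ℕ) : ℤ) - y k i) = fun i => (x i : ℤ) := by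
        funext i
        simp [hT]
      simp only [Function.comp_apply, hG, harg]
      rw [prodForm, if_pos (fun i => Int.natCast_nonneg _)]
      simp [Int.toNat_natCast]
    rw [← Function.Injective.summable_iff hTinj hvan, hcomp]
    exact hπ
  -- the pointwise key identity
  have hkey : ∀ (x : Fin m → ℕ) (k : Fin K),
      prodForm m c θ (fun i => (x i : ℤ)) * genIntensity m K y κ θ k (fun i => (x i : ℤ))
        = κ k * (∏ i, c i ^ y k i) * G k x := by
    intro x k
    by_cases h : ∀ i, y k i ≤ x i
    · -- main case
      rw [hG]
      simp only [prodForm, genIntensity]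
      rw [if_pos (fun i => Int.natCast_nonneg _), if_pos (fun i => by
        have := h i; omega)]
      simp only [Int.toNat_natCast]
      have htn : ∀ i, ((x i : ℤ) - y k i).toNat = x i - y k i := by
        intro i; have := h i; omega
      calc (∏ i, (c i ^ x i / ∏ j ∈ Finset.range (x i), θ i (j + 1))) *
            (κ k * ∏ i, ∏ j ∈ Finset.range (y k i), θ i ((x i : ℤ) - j))
          = κ k * ∏ i, (c i ^ x i / (∏ j ∈ Finset.range (x i), θ i (j + 1)) *
              ∏ j ∈ Finset.range (y k i), θ i ((x i : ℤ) - j)) := by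
            rw [Finset.prod_mul_distrib]; ring
        _ = κ k * ∏ i, (c i ^ y k i *
              (c i ^ (x i - y k i) / ∏ j ∈ Finset.range (x i - y k i), θ i (j + 1))) := by
            congr 1
            apply Finset.prod_congr rfl
            intro i _
            have hd : y k i + (x i - y k i) = x i := by have := h i; omega
            have hco := aux_coord (θ i) (hθpos i) (c i) (y k i) (x i - y k i)
            rw [hd] at hco
            exact hco
        _ = κ k * (∏ i, c i ^ y k i) * ∏ i, (c i ^ ((x i : ℤ) - y k i).toNat /
              ∏ j ∈ Finset.range (((x i : ℤ) - y k i).toNat), θ i (j + 1)) := by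
            rw [Finset.prod_mul_distrib]
            simp only [htn]
            ring
    · -- degenerate case: some coordinate too small
      push_neg at h
      obtain ⟨i0, hi0⟩ := h
      have hR : G k x = 0 := by
        rw [hG]
        simp only [prodForm]
        rw [if_neg]
        push_neg
        exact ⟨i0, by omega⟩
      have hL : genIntensity m K y κ θ k (fun i => (x i : ℤ)) = 0 := by
        rw [genIntensity]
        have : ∏ i, ∏ j ∈ Finset.range (y k i), θ i ((x i : ℤ) - j) = 0 := by
          apply Finset.prod_eq_zero (Finset.mem_univ i0)
          apply Finset.prod_eq_zero (Finset.mem_range.mpr hi0)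
          apply hθ0
          omega
        rw [this, mul_zero]
      rw [hR, hL, mul_zero, mul_zero]
  -- conclude
  have hsum : Summable (fun x : Fin m → ℕ =>
      ∑ k : Fin K, κ k * (∏ i, c i ^ y k i) * G k x) := by
    apply summable_sum
    intro k _
    exact (hGsum k).mul_left _
  apply hsum.congr
  intro x
  rw [Finset.mul_sum]
  exact Finset.sum_congr rfl fun k _ => (hkey x k).symm
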